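/- The set of nonzero integer vectors lying in the profile of the Gröbner cone C = cone((1,0,0), (0,0,1), (9,6,4)) of the E₇-singularity, i.e. the set of nonzero (a,b,c) ∈ ℤ³ that lie in C and satisfy a − 2b + c ≤ 1, is exactly {(1,0,0), (0,0,1), (9,6,4), (2,1,1), (3,2,2), (5,3,2), (6,4,3)}. -/

import Mathlib

/-- The cone generated by three vectors in `ℝ³`. -/
def coneGen3 (v₁ v₂ v₃ : Fin 3 → ℝ) : Set (Fin 3 → ℝ) :=
  {w | ∃ a b c : ℝ, 0 ≤ a ∧ 0 ≤ b ∧ 0 ≤ c ∧ w = a • v₁ + b • v₂ + c • v₃}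

lemma coneGen3_mem_iff (w : Fin 3 → ℝ) :
    w ∈ coneGen3 ![1, 0, 0] ![0, 0, 1] ![9, 6, 4] ↔
      0 ≤ w 0 ∧ 0 ≤ w 1 ∧ 0 ≤ w 2 ∧ 3 * w 1 ≤ 2 * w 0 ∧ 2 * w 1 ≤ 3 * w 2 := by
  constructor
  · rintro ⟨a, b, c, ha, hb, hc, rfl⟩
    simp only [Pi.add_apply, Pi.smul_apply, Matrix.cons_val_zero, Matrix.cons_val_one,
      Matrix.head_cons, Matrix.cons_val_two, Matrix.tail_cons, smul_eq_mul]
    refine ⟨by linarith, by linarith, by linarith, by linarith, by linarith⟩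
  · rintro ⟨h0, h1, h2, h3, h4⟩
    refine ⟨w 0 - 3 / 2 * w 1, w 2 - 2 / 3 * w 1, w 1 / 6,
      by linarith, by linarith, by linarith, ?_⟩
    funext i
    fin_cases i <;> simp <;> ring

lemma int_enum (a b c : ℤ) (hne : ¬(a = 0 ∧ b = 0 ∧ c = 0))
    (h0 : 0 ≤ a) (h1 : 0 ≤ b) (h2 : 0 ≤ c) (h3 : 3 * b ≤ 2 * a) (h4 : 2 * b ≤ 3 * c)
    (h5 : a - 2 * b + c ≤ 1) :
    (a = 1 ∧ b = 0 ∧ c = 0) ∨ (a = 0 ∧ b = 0 ∧ c = 1) ∨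
    (a = 9 ∧ b = 6 ∧ c = 4) ∨ (a = 2 ∧ b = 1 ∧ c = 1) ∨
    (a = 3 ∧ b = 2 ∧ c = 2) ∨ (a = 5 ∧ b = 3 ∧ c = 2) ∨
    (a = 6 ∧ b = 4 ∧ c = 3) := by
  have hb : b ≤ 6 := by omega
  interval_cases b <;> omega

theorem E7_profile_points_y3 :
    {v : Fin 3 → ℤ | v ≠ 0 ∧
        (fun i => (v i : ℝ)) ∈ coneGen3 ![1, 0, 0] ![0, 0, 1] ![9, 6, 4] ∧
        v 0 - 2 * v 1 + v 2 ≤ 1} =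
      {![1, 0, 0], ![0, 0, 1], ![9, 6, 4], ![2, 1, 1], ![3, 2, 2], ![5, 3, 2],
        ![6, 4, 3]} := by
  ext v
  have hzero : v ≠ 0 ↔ ¬(v 0 = 0 ∧ v 1 = 0 ∧ v 2 = 0) := by
    constructor
    · intro h hc
      exact h (funext fun i => by fin_cases i <;> simp [hc.1, hc.2.1, hc.2.2])
    · intro h hc
      exact h ⟨by rw [hc]; rfl, by rw [hc]; rfl, by rw [hc]; rfl⟩
  have hcone : (fun i => (v i : ℝ)) ∈ coneGen3 ![1, 0, 0] ![0, 0, 1] ![9, 6, 4] ↔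
      0 ≤ v 0 ∧ 0 ≤ v 1 ∧ 0 ≤ v 2 ∧ 3 * v 1 ≤ 2 * v 0 ∧ 2 * v 1 ≤ 3 * v 2 := by
    rw [coneGen3_mem_iff]
    constructor
    · rintro ⟨a, b, c, d, e⟩
      exact ⟨by exact_mod_cast a, by exact_mod_cast b, by exact_mod_cast c,
        by exact_mod_cast d, by exact_mod_cast e⟩
    · rintro ⟨a, b, c, d, e⟩
      exact ⟨by exact_mod_cast a, by exact_mod_cast b, by exact_mod_cast c,
        by exact_mod_cast d, by exact_mod_cast e⟩
  simp only [Set.mem_setOf_eq, Set.mem_insert_iff, Set.mem_singleton_iff, hcone, hzero]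
  constructor
  · rintro ⟨hne, ⟨h0, h1, h2, h3, h4⟩, h5⟩
    have key := int_enum (v 0) (v 1) (v 2) hne h0 h1 h2 h3 h4 h5
    rcases key with ⟨a, b, c⟩ | ⟨a, b, c⟩ | ⟨a, b, c⟩ | ⟨a, b, c⟩ | ⟨a, b, c⟩ |
      ⟨a, b, c⟩ | ⟨a, b, c⟩ <;>
      [left; (right; left); (right; right; left); (right; right; right; left);
       (right; right; right; right; left); (right; right; right; right; right; left);
       (right; right; right; right; right; right)] <;>
      exact funext fun i => by fin_cases i <;> simp [a, b, c]
  · intro h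
    rcases h with h | h | h | h | h | h | h <;> subst h <;>
      exact ⟨by simp, ⟨by norm_num, by norm_num, by norm_num [Matrix.cons_val_two], by norm_num,
        by norm_num [Matrix.cons_val_two]⟩,
        by norm_num [Matrix.cons_val_two]⟩
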